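/- There exists an absolute constant c > 0 with the following property. Let s[1..n] be any string (n ≥ 1) with previous-occurrence array C and 0th-order empirical entropy H₀(s), and define the string t[1..n] over the nonnegative integers by t[q] = 0 if C[q] = 0 and t[q] = ⌈log₂(2 + log₂(q − C[q]))⌉ + 1 if C[q] ≥ 1. Then H₀(t) ≤ c · log₂(H₀(s) + 2). -/

import Mathlib

/-- `C` is the previous-occurrence array for the string `s[1..n]`:
`C q` is the largest `p < q` (with `p ≥ 1`) such that `s p = s q`, or `0` if none exists. -/
def prevOcc {α : Type*} (n : ℕ) (s : ℕ → α) (C : ℕ → ℕ) : Prop :=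
  ∀ q, 1 ≤ q → q ≤ n →
    (1 ≤ C q ∧ C q < q ∧ s (C q) = s q ∧ ∀ p, C q < p → p < q → s p ≠ s q) ∨
    (C q = 0 ∧ ∀ p, 1 ≤ p → p < q → s p ≠ s q)

/-- The 0th-order empirical entropy `H₀` of the string `w[1..n]`:
`∑_c (n_c/n)·log₂(n/n_c)` over the symbols `c` occurring in `w`,
where `n_c` is the number of occurrences of `c` in `w[1..n]`. -/
noncomputable def H0 {α : Type*} [DecidableEq α] (n : ℕ) (w : ℕ → α) : ℝ :=
  ∑ c ∈ (Finset.Icc 1 n).image w,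
    (((Finset.Icc 1 n).filter (fun q => w q = c)).card : ℝ) / n *
      Real.logb 2 ((n : ℝ) / ((Finset.Icc 1 n).filter (fun q => w q = c)).card)

open Finset

private lemma geom_aux (N : ℕ) : ∑ v ∈ Finset.range N, ((1:ℝ)/2)^(v+1) = 1 - (1/2)^N := by
  induction N with
  | zero => simp
  | succ n ih => rw [Finset.sum_range_succ, ih, pow_succ]; ring

private lemma my_geom_le (V : Finset ℕ) : ∑ v ∈ V, ((1:ℝ)/2)^(v+1) ≤ 1 := by
  obtain ⟨N, hN⟩ : ∃ N, V ⊆ Finset.range N :=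
    ⟨(V.sup id)+1, fun x hx => Finset.mem_range.2 (Nat.lt_succ_of_le (Finset.le_sup (f:=id) hx))⟩
  calc ∑ v ∈ V, ((1:ℝ)/2)^(v+1) ≤ ∑ v ∈ Finset.range N, ((1:ℝ)/2)^(v+1) :=
        Finset.sum_le_sum_of_subset_of_nonneg hN (fun i _ _ => by positivity)
    _ = 1 - (1/2)^N := geom_aux N
    _ ≤ 1 := by nlinarith [pow_pos (by norm_num : (0:ℝ)<1/2) N]

private lemma log_tangent {x a : ℝ} (hx : 0 < x) (ha : 0 < a) :
    Real.log x ≤ Real.log a + (x - a) / a := by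
  have h := Real.log_le_sub_one_of_pos (show (0:ℝ) < x / a by positivity)
  rw [Real.log_div (ne_of_gt hx) (ne_of_gt ha)] at h
  have h2 : x / a - 1 = (x - a) / a := by field_simp
  linarith [h2 ▸ h]

private lemma term_bound {n m : ℕ} (v : ℕ) (hm : 1 ≤ m) (hmn : m ≤ n) :
    (m:ℝ)/n * Real.logb 2 ((n:ℝ)/m) ≤
      (m:ℝ)/n * ((v:ℝ)+1) + (((1:ℝ)/2)^(v+1) - (m:ℝ)/n) / Real.log 2 := by
  have hmpos : (0:ℝ) < m := by exact_mod_cast hm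
  have hnpos : (0:ℝ) < n := lt_of_lt_of_le hmpos (by exact_mod_cast hmn)
  have hL : (0:ℝ) < Real.log 2 := Real.log_pos (by norm_num)
  set w : ℝ := ((1:ℝ)/2)^(v+1) with hw
  have hwpos : 0 < w := by positivity
  have h1 : Real.log (w * ((n:ℝ)/m)) ≤ w * ((n:ℝ)/m) - 1 :=
    Real.log_le_sub_one_of_pos (by positivity)
  have h2 : Real.log (w * ((n:ℝ)/m)) = Real.log w + Real.log ((n:ℝ)/m) :=
    Real.log_mul (ne_of_gt hwpos) (by positivity)
  have h3 : Real.log w = -(((v:ℝ)+1) * Real.log 2) := by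
    rw [hw, Real.log_pow]
    push_cast
    rw [Real.log_div one_ne_zero two_ne_zero, Real.log_one]
    ring
  have key : Real.log ((n:ℝ)/m) ≤ w * ((n:ℝ)/m) - 1 + ((v:ℝ)+1) * Real.log 2 := by
    rw [h2, h3] at h1; linarith
  have hp : (0:ℝ) ≤ (m:ℝ)/n := by positivity
  have k2 := mul_le_mul_of_nonneg_left key hp
  have hmn' : (m:ℝ)/n * (w * ((n:ℝ)/m)) = w := by field_simp
  have k3 : (m:ℝ)/n * (w * ((n:ℝ)/m) - 1 + ((v:ℝ)+1) * Real.log 2)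
      = w - (m:ℝ)/n + (m:ℝ)/n * (((v:ℝ)+1) * Real.log 2) := by
    have : (m:ℝ)/n * (w * ((n:ℝ)/m) - 1 + ((v:ℝ)+1) * Real.log 2)
        = (m:ℝ)/n * (w * ((n:ℝ)/m)) - (m:ℝ)/n + (m:ℝ)/n * (((v:ℝ)+1) * Real.log 2) := by ring
    rw [this, hmn']
  rw [Real.logb]
  rw [show (m:ℝ)/n * (Real.log ((n:ℝ)/m) / Real.log 2)
      = ((m:ℝ)/n * Real.log ((n:ℝ)/m)) / Real.log 2 from by ring]
  rw [show (m:ℝ)/n * ((v:ℝ)+1) + (w - (m:ℝ)/n)/Real.log 2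
      = ((m:ℝ)/n * (((v:ℝ)+1) * Real.log 2) + (w - (m:ℝ)/n))/Real.log 2 from by
        field_simp]
  rw [div_le_div_iff₀ hL hL]
  nlinarith [k2, k3]

/-- Step A : entropy is at most 1 + average value, for ℕ-valued strings. -/
private lemma entropy_le_avg (n : ℕ) (hn : 1 ≤ n) (t : ℕ → ℕ) :
    H0 n t ≤ 1 + (∑ q ∈ Finset.Icc 1 n, (t q : ℝ)) / n := by
  classical
  have hnpos : (0:ℝ) < n := by exact_mod_cast hn
  have hL : (0:ℝ) < Real.log 2 := Real.log_pos (by norm_num)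
  set I := Finset.Icc 1 n with hI
  have hcardI : I.card = n := by simp [hI]
  set V := I.image t with hV
  have hmaps : ∀ q ∈ I, t q ∈ V := fun q hq => Finset.mem_image_of_mem t hq
  have hsum_m : ∑ v ∈ V, ((I.filter (fun q => t q = v)).card : ℝ) = n := by
    rw [← Nat.cast_sum]
    norm_cast
    rw [← hcardI]
    exact (Finset.card_eq_sum_card_fiberwise hmaps).symm
  have hfib : ∑ v ∈ V, ((I.filter (fun q => t q = v)).card : ℝ) * ((v:ℝ)+1)
      = (n:ℝ) + ∑ q ∈ I, (t q : ℝ) := by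
    have h1 := Finset.sum_fiberwise_of_maps_to hmaps (fun q => (t q : ℝ) + 1)
    have h2 : ∀ v ∈ V, ∑ i ∈ I.filter (fun i => t i = v), ((t i:ℝ)+1)
        = ((I.filter (fun i => t i = v)).card : ℝ) * ((v:ℝ)+1) := by
      intro v hv
      rw [Finset.sum_congr rfl (fun i hi => by rw [(Finset.mem_filter.1 hi).2])]
      rw [Finset.sum_const, nsmul_eq_mul]
    rw [Finset.sum_congr rfl h2] at h1
    rw [h1, Finset.sum_add_distrib]
    simp [hcardI, add_comm]
  have hH0 : H0 n t = ∑ v ∈ V, (((I.filter (fun q => t q = v)).card : ℝ)/n *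
      Real.logb 2 ((n:ℝ)/((I.filter (fun q => t q = v)).card))) := rfl
  have hbound : H0 n t ≤ ∑ v ∈ V, (((I.filter (fun q => t q = v)).card : ℝ)/n * ((v:ℝ)+1)
      + (((1:ℝ)/2)^(v+1) - ((I.filter (fun q => t q = v)).card : ℝ)/n) / Real.log 2) := by
    rw [hH0]
    apply Finset.sum_le_sum
    intro v hv
    have hm : 1 ≤ (I.filter (fun q => t q = v)).card := by
      obtain ⟨q, hq, hqv⟩ := Finset.mem_image.1 hv
      exact Finset.card_pos.2 ⟨q, Finset.mem_filter.2 ⟨hq, hqv⟩⟩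
    have hmn : (I.filter (fun q => t q = v)).card ≤ n := hcardI ▸ Finset.card_filter_le I _
    exact term_bound v hm hmn
  rw [Finset.sum_add_distrib] at hbound
  have e1 : ∑ v ∈ V, ((I.filter (fun q => t q = v)).card : ℝ)/n * ((v:ℝ)+1)
      = 1 + (∑ q ∈ I, (t q:ℝ))/n := by
    have h4 : ∀ v ∈ V, ((I.filter (fun q => t q = v)).card : ℝ)/n * ((v:ℝ)+1)
        = ((I.filter (fun q => t q = v)).card : ℝ) * ((v:ℝ)+1) / n := fun v _ => by ring
    rw [Finset.sum_congr rfl h4, ← Finset.sum_div, hfib, add_div, div_self (ne_of_gt hnpos)]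
  have e2 : ∑ v ∈ V, (((1:ℝ)/2)^(v+1) - ((I.filter (fun q => t q = v)).card : ℝ)/n) / Real.log 2
      ≤ 0 := by
    rw [← Finset.sum_div]
    apply div_nonpos_of_nonpos_of_nonneg _ (le_of_lt hL)
    rw [Finset.sum_sub_distrib]
    have : ∑ v ∈ V, ((I.filter (fun q => t q = v)).card : ℝ)/n = 1 := by
      rw [← Finset.sum_div, hsum_m, div_self (ne_of_gt hnpos)]
    rw [this]
    linarith [my_geom_le V]
  rw [e1] at hbound
  linarith [e2]

private lemma per_symbol {α : Type} [DecidableEq α] {n : ℕ} (hn : 1 ≤ n) {s : ℕ → α} {C : ℕ → ℕ}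
    (hC : prevOcc n s C) (a : α) (ha : a ∈ (Finset.Icc 1 n).image s) :
    ∑ q ∈ ((Finset.Icc 1 n).filter (fun q => 1 ≤ C q)).filter (fun q => s q = a),
        Real.logb 2 ((q:ℝ) - (C q:ℝ))
      ≤ (((Finset.Icc 1 n).filter (fun q => s q = a)).card : ℝ) *
          Real.logb 2 ((n:ℝ) / (((Finset.Icc 1 n).filter (fun q => s q = a)).card : ℝ)) := by
  classical
  have hL : (0:ℝ) < Real.log 2 := Real.log_pos (by norm_num)
  set I := Finset.Icc 1 n with hI
  set Occ := I.filter (fun q => s q = a) with hOcc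
  set F := (I.filter (fun q => 1 ≤ C q)).filter (fun q => s q = a) with hF
  -- membership in F
  have hFmem : ∀ q, q ∈ F ↔ (1 ≤ q ∧ q ≤ n ∧ 1 ≤ C q ∧ s q = a) := by
    intro q
    simp only [hF, Finset.mem_filter, hI, Finset.mem_Icc]
    tauto
  -- basic facts about q ∈ F
  have hcase : ∀ q ∈ F, C q < q ∧ s (C q) = s q ∧ (∀ p, C q < p → p < q → s p ≠ s q) := by
    intro q hq
    obtain ⟨h1, h2, h3, _⟩ := (hFmem q).1 hq
    rcases hC q h1 h2 with h | h
    · exact ⟨h.2.1, h.2.2.1, h.2.2.2⟩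
    · omega
  -- Occ is nonempty
  obtain ⟨q1, hq1I, hq1a⟩ := Finset.mem_image.1 ha
  have hOccne : Occ.Nonempty := ⟨q1, Finset.mem_filter.2 ⟨hq1I, hq1a⟩⟩
  set q₀ := Occ.min' hOccne with hq₀
  have hq₀mem : q₀ ∈ Occ := Finset.min'_mem _ _
  have hq₀I : q₀ ∈ I := (Finset.mem_filter.1 hq₀mem).1
  have hq₀a : s q₀ = a := (Finset.mem_filter.1 hq₀mem).2
  have hq₀1 : 1 ≤ q₀ := (Finset.mem_Icc.1 (hI ▸ hq₀I)).1
  -- F = Occ.erase q₀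
  have hFOcc : F = Occ.erase q₀ := by
    ext q
    constructor
    · intro hq
      obtain ⟨h1, h2, h3, h4⟩ := (hFmem q).1 hq
      obtain ⟨hlt, hs, _⟩ := hcase q hq
      refine Finset.mem_erase.2 ⟨?_, Finset.mem_filter.2 ⟨hI ▸ Finset.mem_Icc.2 ⟨h1, h2⟩, h4⟩⟩
      intro hqq₀
      have hCmem : C q ∈ Occ := by
        refine Finset.mem_filter.2 ⟨hI ▸ Finset.mem_Icc.2 ⟨h3, by omega⟩, by rw [hs, h4]⟩
      have := Finset.min'_le Occ (C q) hCmem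
      omega
    · intro hq
      obtain ⟨hne, hqOcc⟩ := Finset.mem_erase.1 hq
      obtain ⟨hqI, hqa⟩ := Finset.mem_filter.1 hqOcc
      obtain ⟨h1, h2⟩ := Finset.mem_Icc.1 (hI ▸ hqI)
      have hq₀lt : q₀ < q := lt_of_le_of_ne (Finset.min'_le Occ q hqOcc) (Ne.symm hne)
      refine (hFmem q).2 ⟨h1, h2, ?_, hqa⟩
      rcases hC q h1 h2 with h | h
      · exact h.1
      · exact absurd (hqa ▸ hq₀a ▸ rfl) (h.2 q₀ hq₀1 hq₀lt)
  have hkpos : 1 ≤ Occ.card := Finset.card_pos.2 hOccne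
  have hkn : Occ.card ≤ n := by
    calc Occ.card ≤ I.card := Finset.card_filter_le I _
      _ = n := by simp [hI]
  have hkF : F.card = Occ.card - 1 := by rw [hFOcc, Finset.card_erase_of_mem hq₀mem]
  -- disjoint intervals, gap sum bound
  have haux : ∀ q ∈ F, ∀ q' ∈ F, q < q' → q ≤ C q' := by
    intro q hq q' hq' hlt
    by_contra hcon
    push_neg at hcon
    obtain ⟨_, _, hmax⟩ := hcase q' hq'
    exact hmax q hcon hlt (by rw [((hFmem q).1 hq).2.2.2, ((hFmem q').1 hq').2.2.2])
  have hdisj : ∀ q ∈ F, ∀ q' ∈ F, q ≠ q' →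
      Disjoint (Finset.Ioc (C q) q) (Finset.Ioc (C q') q') := by
    have key : ∀ q ∈ F, ∀ q' ∈ F, q < q' →
        Disjoint (Finset.Ioc (C q) q) (Finset.Ioc (C q') q') := by
      intro q hq q' hq' hlt
      have h := haux q hq q' hq' hlt
      apply Finset.disjoint_left.2
      intro x hx hx'
      rw [Finset.mem_Ioc] at hx hx'
      omega
    intro q hq q' hq' hne
    rcases lt_or_gt_of_ne hne with h | h
    · exact key q hq q' hq' h
    · exact (key q' hq' q hq h).symm
  have hGnat : ∑ q ∈ F, (q - C q) ≤ n - 1 := by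
    have h1 : ∑ q ∈ F, (q - C q) = ∑ q ∈ F, (Finset.Ioc (C q) q).card := by
      simp [Nat.card_Ioc]
    have h2 : (F.biUnion (fun q => Finset.Ioc (C q) q)).card
        = ∑ q ∈ F, (Finset.Ioc (C q) q).card := Finset.card_biUnion hdisj
    have hsub : F.biUnion (fun q => Finset.Ioc (C q) q) ⊆ Finset.Ioc 1 n := by
      intro x hx
      obtain ⟨q, hq, hxq⟩ := Finset.mem_biUnion.1 hx
      rw [Finset.mem_Ioc] at hxq ⊢
      obtain ⟨_, h2', h3', _⟩ := (hFmem q).1 hq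
      omega
    calc ∑ q ∈ F, (q - C q) = (F.biUnion (fun q => Finset.Ioc (C q) q)).card := by rw [h1, h2]
      _ ≤ (Finset.Ioc 1 n).card := Finset.card_le_card hsub
      _ = n - 1 := by rw [Nat.card_Ioc]
  -- real versions
  have hnpos : (0:ℝ) < n := by exact_mod_cast hn
  set k : ℝ := (Occ.card : ℝ) with hk
  have hkpos' : (1:ℝ) ≤ k := by rw [hk]; exact_mod_cast hkpos
  have hkn' : k ≤ n := by rw [hk]; exact_mod_cast hkn
  have hk0 : (0:ℝ) < k := by linarith
  have hkF' : (F.card : ℝ) = k - 1 := by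
    rw [hkF, hk]
    push_cast [hkpos]
    ring
  have hG : ∑ q ∈ F, ((q:ℝ) - (C q:ℝ)) ≤ (n:ℝ) - 1 := by
    have e : ∑ q ∈ F, ((q:ℝ) - (C q:ℝ)) = ((∑ q ∈ F, (q - C q) : ℕ) : ℝ) := by
      rw [Nat.cast_sum]
      refine Finset.sum_congr rfl (fun q hq => ?_)
      rw [Nat.cast_sub (le_of_lt (hcase q hq).1)]
    rw [e]
    have : ((∑ q ∈ F, (q - C q) : ℕ) : ℝ) ≤ ((n - 1 : ℕ) : ℝ) := by exact_mod_cast hGnat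
    calc ((∑ q ∈ F, (q - C q) : ℕ) : ℝ) ≤ ((n - 1 : ℕ) : ℝ) := this
      _ = (n:ℝ) - 1 := by push_cast [hn]; ring
  -- analytic part
  set a₀ : ℝ := (n:ℝ) / k with ha₀
  have ha₀pos : 0 < a₀ := by positivity
  have hga : ∀ q ∈ F, (1:ℝ) ≤ (q:ℝ) - (C q:ℝ) := by
    intro q hq
    have := (hcase q hq).1
    have : (C q : ℝ) + 1 ≤ (q : ℝ) := by exact_mod_cast this
    linarith
  have hlogsum : ∑ q ∈ F, Real.log ((q:ℝ) - (C q:ℝ))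
      ≤ (F.card : ℝ) * Real.log a₀
        + ((∑ q ∈ F, ((q:ℝ) - (C q:ℝ))) - (F.card : ℝ) * a₀) / a₀ := by
    calc ∑ q ∈ F, Real.log ((q:ℝ) - (C q:ℝ))
        ≤ ∑ q ∈ F, (Real.log a₀ + (((q:ℝ) - (C q:ℝ)) - a₀) / a₀) := by
          refine Finset.sum_le_sum (fun q hq => log_tangent ?_ ha₀pos)
          linarith [hga q hq]
      _ = (F.card : ℝ) * Real.log a₀
        + ((∑ q ∈ F, ((q:ℝ) - (C q:ℝ))) - (F.card : ℝ) * a₀) / a₀ := by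
          rw [Finset.sum_add_distrib, Finset.sum_const, nsmul_eq_mul, ← Finset.sum_div,
            Finset.sum_sub_distrib, Finset.sum_const, nsmul_eq_mul]
  have hlog_lb : 1 - k/(n:ℝ) ≤ Real.log a₀ := by
    have h1 : Real.log (k/(n:ℝ)) ≤ k/(n:ℝ) - 1 := Real.log_le_sub_one_of_pos (by positivity)
    have h2 : Real.log a₀ = - Real.log (k/(n:ℝ)) := by
      rw [ha₀, Real.log_div (ne_of_gt hnpos) (ne_of_gt hk0),
        Real.log_div (ne_of_gt hk0) (ne_of_gt hnpos)]
      ring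
    linarith
  have hmain : ∑ q ∈ F, Real.log ((q:ℝ) - (C q:ℝ)) ≤ k * Real.log a₀ := by
    have hdiv : ((∑ q ∈ F, ((q:ℝ) - (C q:ℝ))) - (F.card : ℝ) * a₀) / a₀
        = (∑ q ∈ F, ((q:ℝ) - (C q:ℝ))) * k / n - (F.card : ℝ) := by
      rw [ha₀]
      field_simp
    rw [hkF'] at hlogsum hdiv
    have hGk : (∑ q ∈ F, ((q:ℝ) - (C q:ℝ))) * k / n ≤ k - k/n := by
      have h1 : (∑ q ∈ F, ((q:ℝ) - (C q:ℝ))) * k ≤ ((n:ℝ) - 1) * k :=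
        mul_le_mul_of_nonneg_right hG (le_of_lt hk0)
      calc (∑ q ∈ F, ((q:ℝ) - (C q:ℝ))) * k / n ≤ ((n:ℝ) - 1) * k / n := by
            gcongr
        _ = k - k/n := by field_simp
    rw [hdiv] at hlogsum
    nlinarith [hlogsum, hGk, hlog_lb]
  -- convert to logb
  have e1 : ∑ q ∈ F, Real.logb 2 ((q:ℝ) - (C q:ℝ))
      = (∑ q ∈ F, Real.log ((q:ℝ) - (C q:ℝ))) / Real.log 2 := by
    rw [Finset.sum_div]
    rfl
  rw [e1, Real.logb]
  rw [show k * (Real.log a₀ / Real.log 2) = (k * Real.log a₀) / Real.log 2 from by ring]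
  gcongr

private lemma sum_log_gaps {α : Type} [DecidableEq α] {n : ℕ} (hn : 1 ≤ n) {s : ℕ → α}
    {C : ℕ → ℕ} (hC : prevOcc n s C) :
    ∑ q ∈ (Finset.Icc 1 n).filter (fun q => 1 ≤ C q), Real.logb 2 ((q:ℝ) - (C q:ℝ))
      ≤ (n:ℝ) * H0 n s := by
  classical
  have hnpos : (0:ℝ) < n := by exact_mod_cast hn
  set I := Finset.Icc 1 n with hI
  set A := I.filter (fun q => 1 ≤ C q) with hA
  have hmaps : ∀ q ∈ A, s q ∈ I.image s :=
    fun q hq => Finset.mem_image_of_mem s (Finset.filter_subset _ _ hq)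
  have hgroup := Finset.sum_fiberwise_of_maps_to hmaps
    (fun q => Real.logb 2 ((q:ℝ) - (C q:ℝ)))
  rw [← hgroup]
  have hH0 : (n:ℝ) * H0 n s = ∑ a ∈ I.image s,
      ((I.filter (fun q => s q = a)).card : ℝ) *
        Real.logb 2 ((n:ℝ) / ((I.filter (fun q => s q = a)).card : ℝ)) := by
    rw [H0, Finset.mul_sum]
    refine Finset.sum_congr rfl (fun a _ => ?_)
    field_simp
    rfl
  rw [hH0]
  exact Finset.sum_le_sum (fun a ha => per_symbol hn hC a ha)

theorem stmt_14 :
    ∃ c : ℝ, 0 < c ∧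
      ∀ (α : Type) (_ : DecidableEq α) (n : ℕ), 1 ≤ n →
        ∀ (s : ℕ → α) (C : ℕ → ℕ), prevOcc n s C →
          ∀ t : ℕ → ℕ,
            (∀ q, 1 ≤ q → q ≤ n →
              (C q = 0 → t q = 0) ∧
              (1 ≤ C q →
                t q = ⌈Real.logb 2 (2 + Real.logb 2 ((q : ℝ) - (C q : ℝ)))⌉₊ + 1)) →
            H0 n t ≤ c * Real.logb 2 (H0 n s + 2) := by
  classical
  refine ⟨4, by norm_num, ?_⟩
  intro α _ n hn s C hC t ht
  have hnpos : (0:ℝ) < n := by exact_mod_cast hn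
  have hL : (0:ℝ) < Real.log 2 := Real.log_pos (by norm_num)
  set I := Finset.Icc 1 n with hI
  -- H0 s is nonnegative
  have hH0s : 0 ≤ H0 n s := by
    rw [H0]
    apply Finset.sum_nonneg
    intro a ha
    have hm : 1 ≤ (I.filter (fun q => s q = a)).card := by
      obtain ⟨q, hq, hqa⟩ := Finset.mem_image.1 ha
      exact Finset.card_pos.2 ⟨q, Finset.mem_filter.2 ⟨hq, hqa⟩⟩
    have hmn : (I.filter (fun q => s q = a)).card ≤ n := by
      calc (I.filter (fun q => s q = a)).card ≤ I.card := Finset.card_filter_le I _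
        _ = n := by simp [hI]
    have hmpos : (0:ℝ) < ((I.filter (fun q => s q = a)).card : ℝ) := by exact_mod_cast hm
    apply mul_nonneg (by positivity)
    apply Real.logb_nonneg (by norm_num)
    rw [le_div_iff₀ hmpos]
    rw [one_mul]
    exact_mod_cast hmn
  -- gap facts
  have hClt : ∀ q, 1 ≤ q → q ≤ n → 1 ≤ C q → C q < q := by
    intro q h1 h2 h3
    rcases hC q h1 h2 with h | h
    · exact h.2.1
    · omega
  have hga : ∀ q, 1 ≤ q → q ≤ n → 1 ≤ C q → (1:ℝ) ≤ (q:ℝ) - (C q:ℝ) := by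
    intro q h1 h2 h3
    have := hClt q h1 h2 h3
    have : (C q:ℝ) + 1 ≤ (q:ℝ) := by exact_mod_cast this
    linarith
  -- the modified value x q
  set x : ℕ → ℝ := fun q => if 1 ≤ C q then Real.logb 2 ((q:ℝ) - (C q:ℝ)) else 0 with hx
  have hx0 : ∀ q ∈ I, 0 ≤ x q := by
    intro q hq
    obtain ⟨h1, h2⟩ := Finset.mem_Icc.1 (hI ▸ hq)
    rw [hx]
    by_cases h : 1 ≤ C q
    · simp only [h, if_true]
      exact Real.logb_nonneg (by norm_num) (hga q h1 h2 h)
    · simp [h]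
  set S : ℝ := ∑ q ∈ I, x q with hS
  have hS0 : 0 ≤ S := Finset.sum_nonneg hx0
  have hSbound : S ≤ (n:ℝ) * H0 n s := by
    rw [hS]
    have : ∑ q ∈ I, x q
        = ∑ q ∈ I.filter (fun q => 1 ≤ C q), Real.logb 2 ((q:ℝ) - (C q:ℝ)) := by
      rw [Finset.sum_filter]
    rw [this]
    exact sum_log_gaps hn hC
  -- Step B : pointwise bound on t
  set M : ℝ := 2 + S / n with hM
  have hM2 : (2:ℝ) ≤ M := by
    rw [hM]
    have : 0 ≤ S / n := by positivity
    linarith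
  have hMpos : 0 < M := by linarith
  have htq : ∀ q ∈ I, (t q : ℝ) ≤ Real.logb 2 (2 + x q) + 2 := by
    intro q hq
    obtain ⟨h1, h2⟩ := Finset.mem_Icc.1 (hI ▸ hq)
    obtain ⟨ht0, ht1⟩ := ht q h1 h2
    by_cases h : 1 ≤ C q
    · rw [ht1 h]
      have hxq : x q = Real.logb 2 ((q:ℝ) - (C q:ℝ)) := by rw [hx]; simp [h]
      have hy0 : 0 ≤ Real.logb 2 (2 + Real.logb 2 ((q:ℝ) - (C q:ℝ))) := by
        apply Real.logb_nonneg (by norm_num)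
        have := Real.logb_nonneg (show (1:ℝ) < 2 by norm_num) (hga q h1 h2 h)
        linarith
      have hceil := Nat.ceil_lt_add_one hy0
      rw [hxq]
      push_cast
      linarith
    · rw [ht0 (by omega)]
      have hxq : x q = 0 := by rw [hx]; simp [h]
      rw [hxq]
      have h22 : (0:ℝ) ≤ Real.logb 2 (2 + 0) := Real.logb_nonneg (by norm_num) (by norm_num)
      push_cast
      linarith
  -- Step C : concavity via tangent line
  have hcardI : I.card = n := by simp [hI]
  have hlogsum : ∑ q ∈ I, Real.log (2 + x q) ≤ (n:ℝ) * Real.log M := by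
    have htangent : ∀ q ∈ I, Real.log (2 + x q) ≤ Real.log M + ((2 + x q) - M)/M :=
      fun q hq => log_tangent (by linarith [hx0 q hq]) hMpos
    calc ∑ q ∈ I, Real.log (2 + x q)
        ≤ ∑ q ∈ I, (Real.log M + ((2 + x q) - M)/M) := Finset.sum_le_sum htangent
      _ = (n:ℝ) * Real.log M + ((2*n + S - n*M))/M := by
          rw [Finset.sum_add_distrib, Finset.sum_const, nsmul_eq_mul, hcardI, ← Finset.sum_div,
            Finset.sum_sub_distrib, Finset.sum_add_distrib, Finset.sum_const, nsmul_eq_mul,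
            hcardI, Finset.sum_const, nsmul_eq_mul, hcardI, ← hS]
          ring_nf
      _ = (n:ℝ) * Real.log M := by
          rw [hM]
          field_simp
          ring
  have hsum_t : ∑ q ∈ I, (t q:ℝ) ≤ (n:ℝ) * Real.logb 2 M + 2*n := by
    calc ∑ q ∈ I, (t q:ℝ) ≤ ∑ q ∈ I, (Real.logb 2 (2 + x q) + 2) := Finset.sum_le_sum htq
      _ = ∑ q ∈ I, Real.logb 2 (2 + x q) + 2*n := by
          rw [Finset.sum_add_distrib, Finset.sum_const, nsmul_eq_mul, hcardI]
          ring
      _ ≤ (n:ℝ) * Real.logb 2 M + 2*n := by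
          have e : ∑ q ∈ I, Real.logb 2 (2 + x q)
              = (∑ q ∈ I, Real.log (2 + x q)) / Real.log 2 := by
            rw [Finset.sum_div]; rfl
          rw [e, Real.logb]
          have e2 : (n:ℝ) * (Real.log M / Real.log 2) = ((n:ℝ) * Real.log M) / Real.log 2 := by
            ring
          rw [e2]
          gcongr
  -- assemble
  have hfinal := entropy_le_avg n hn t
  have hMle : M ≤ H0 n s + 2 := by
    rw [hM]
    have : S/n ≤ H0 n s := by
      rw [div_le_iff₀ hnpos]
      linarith [hSbound]
    linarith
  have hlogM : Real.logb 2 M ≤ Real.logb 2 (H0 n s + 2) :=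
    Real.logb_le_logb_of_le (by norm_num) hMpos hMle
  have hlog1 : 1 ≤ Real.logb 2 (H0 n s + 2) := by
    have h1 : Real.logb 2 2 ≤ Real.logb 2 (H0 n s + 2) :=
      Real.logb_le_logb_of_le (by norm_num) (by norm_num) (by linarith)
    rw [Real.logb_self_eq_one (by norm_num)] at h1
    exact h1
  have havg : (∑ q ∈ I, (t q:ℝ))/n ≤ Real.logb 2 M + 2 := by
    have e : ((n:ℝ) * Real.logb 2 M + 2*n)/n = Real.logb 2 M + 2 := by
      field_simp
    rw [← e]
    gcongr
  calc H0 n t ≤ 1 + (∑ q ∈ I, (t q:ℝ))/n := hfinal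
    _ ≤ 1 + (Real.logb 2 M + 2) := by linarith
    _ = 3 + Real.logb 2 M := by ring
    _ ≤ 3 + Real.logb 2 (H0 n s + 2) := by linarith
    _ ≤ 4 * Real.logb 2 (H0 n s + 2) := by linarith
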